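/- Let g be a hyperbolic element of a group G ⊆ Homeo⁺(S^1) with fixed points a and b, and let Λ be a G-invariant very-full lamination. If Λ does not contain the leaf (a,b), then Λ contains a leaf l that separates a and b, i.e., the two endpoints of l lie in different connected components of S^1 \ {a, b}. -/

import Mathlib

open Set Metric Filter Topology Function
noncomputable section

/-- The circle, modeled as `ℝ/ℤ`. -/
abbrev C1 := AddCircle (1:ℝ)

/-- The embedding of the circle into `ℂ` as the unit circle. -/
def toC (x : C1) : ℂ := (AddCircle.toCircle x : ℂ)

/-- Two unordered pairs `{a,b}`, `{c,d}` of points of the circle are linked if `c` and `d`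
lie in different connected components of the complement of `{a,b}`. -/
def Linked (a b c d : C1) : Prop :=
  c ∈ ({a,b}ᶜ : Set C1) ∧ d ∈ ({a,b}ᶜ : Set C1) ∧
    connectedComponentIn ({a,b}ᶜ : Set C1) c ≠ connectedComponentIn ({a,b}ᶜ : Set C1) d

/-- A lamination on the circle: a closed (in the open Möbius band, i.e. among pairs of
distinct points) symmetric set of pairwise unlinked pairs of distinct points. -/
structure IsLamination (Λ : Set (C1 × C1)) : Prop where
  ne : ∀ p ∈ Λ, p.1 ≠ p.2
  symm : ∀ p ∈ Λ, (p.2, p.1) ∈ Λ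
  isClosed : ∀ p ∈ closure Λ, p.1 ≠ p.2 → p ∈ Λ
  unlinked : ∀ p ∈ Λ, ∀ q ∈ Λ, ¬ Linked p.1 p.2 q.1 q.2

/-- The set of endpoints of leaves of a lamination. -/
def Ends (Λ : Set (C1 × C1)) : Set C1 := {x | ∃ y, (x, y) ∈ Λ}

/-- The union of the chords (in the unit disk of `ℂ`) realizing the leaves. -/
def chords (Λ : Set (C1 × C1)) : Set ℂ := ⋃ p ∈ Λ, segment ℝ (toC p.1) (toC p.2)

/-- A gap of a lamination: the closure of a connected component of the complement of the
union of the chords in the open unit disk. -/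
def IsGap (Λ : Set (C1 × C1)) (P : Set ℂ) : Prop :=
  ∃ x ∈ ball (0:ℂ) 1 \ chords Λ,
    P = closure (connectedComponentIn (ball (0:ℂ) 1 \ chords Λ) x)

/-- A lamination is very-full if every gap is a finite-sided ideal polygon, i.e. the convex
hull of at least three points of the circle. -/
def VeryFull (Λ : Set (C1 × C1)) : Prop :=
  IsLamination Λ ∧ ∀ P, IsGap Λ P →
    ∃ F : Finset C1, 3 ≤ F.card ∧ P = convexHull ℝ (toC '' (F : Set C1))

/-- An orientation-preserving circle homeomorphism: one admitting a monotone lift. -/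
def OrientationPreserving (f : C1 ≃ₜ C1) : Prop :=
  ∃ F : ℝ → ℝ, Monotone F ∧ ∀ x : ℝ, f (x : C1) = ((F x : ℝ) : C1)

/-- A subgroup of the homeomorphism group of the circle, as a set of homeomorphisms. -/
def IsHomeoGroup (G : Set (C1 ≃ₜ C1)) : Prop :=
  Homeomorph.refl C1 ∈ G ∧ (∀ g ∈ G, g.symm ∈ G) ∧ ∀ g ∈ G, ∀ h ∈ G, g.trans h ∈ G

/-- A lamination is invariant under a set of homeomorphisms. -/
def Invariant (G : Set (C1 ≃ₜ C1)) (Λ : Set (C1 × C1)) : Prop :=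
  ∀ g ∈ G, ∀ p ∈ Λ, (g p.1, g p.2) ∈ Λ

/-- Invariance under a single homeomorphism. -/
def InvariantUnder (g : C1 ≃ₜ C1) (Λ : Set (C1 × C1)) : Prop :=
  ∀ p ∈ Λ, (g p.1, g p.2) ∈ Λ

/-- A parabolic homeomorphism: exactly one fixed point. -/
def IsParabolic (g : C1 ≃ₜ C1) : Prop := ∃ x, fixedPoints ⇑g = {x}

/-- The cusp points of a group of circle homeomorphisms: fixed points of parabolics. -/
def CuspPoints (G : Set (C1 ≃ₜ C1)) : Set C1 :=
  {x | ∃ g ∈ G, fixedPoints ⇑g = {x}}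

/-- A rainbow at `p` for a lamination: a sequence of leaves each separating `p` from the
rest of the circle, with the arcs they cut off shrinking down to `p`. -/
def Rainbow (Λ : Set (C1 × C1)) (p : C1) : Prop :=
  ∃ l : ℕ → C1 × C1, (∀ i, l i ∈ Λ) ∧ (∀ i, (l i).1 ≠ p ∧ (l i).2 ≠ p) ∧
    Tendsto (fun i => (l i).1) atTop (nhds p) ∧
    Tendsto (fun i => (l i).2) atTop (nhds p) ∧
    ∀ U ∈ nhds p, ∀ᶠ i in atTop,
      connectedComponentIn ({(l i).1, (l i).2}ᶜ : Set C1) p ⊆ U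

/-- A pants-like collection of three very-full invariant laminations: pairwise transverse,
and endpoint sets pairwise meeting exactly in the cusp points of the group. -/
def PantsLike3 (G : Set (C1 ≃ₜ C1)) (Λ₁ Λ₂ Λ₃ : Set (C1 × C1)) : Prop :=
  VeryFull Λ₁ ∧ VeryFull Λ₂ ∧ VeryFull Λ₃ ∧
  Invariant G Λ₁ ∧ Invariant G Λ₂ ∧ Invariant G Λ₃ ∧
  Λ₁ ∩ Λ₂ = ∅ ∧ Λ₁ ∩ Λ₃ = ∅ ∧ Λ₂ ∩ Λ₃ = ∅ ∧
  Ends Λ₁ ∩ Ends Λ₂ = CuspPoints G ∧ Ends Λ₁ ∩ Ends Λ₃ = CuspPoints G ∧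
  Ends Λ₂ ∩ Ends Λ₃ = CuspPoints G

/-- A pants-like collection of two very-full invariant laminations. -/
def PantsLike2 (G : Set (C1 ≃ₜ C1)) (Λ₁ Λ₂ : Set (C1 × C1)) : Prop :=
  VeryFull Λ₁ ∧ VeryFull Λ₂ ∧ Invariant G Λ₁ ∧ Invariant G Λ₂ ∧
  Λ₁ ∩ Λ₂ = ∅ ∧ Ends Λ₁ ∩ Ends Λ₂ = CuspPoints G

/-- An attracting fixed point: some neighborhood is attracted to it under forward iteration. -/
def AttractingFixedPt (g : C1 ≃ₜ C1) (x : C1) : Prop :=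
  g x = x ∧ ∃ U ∈ nhds x, ∀ y ∈ U, Tendsto (fun n => (⇑g)^[n] y) atTop (nhds x)

/-- A repelling fixed point: attracting for the inverse. -/
def RepellingFixedPt (g : C1 ≃ₜ C1) (x : C1) : Prop :=
  g x = x ∧ ∃ U ∈ nhds x, ∀ y ∈ U, Tendsto (fun n => (⇑g.symm)^[n] y) atTop (nhds x)

namespace Stmt7
instance factZeroLtOne : Fact ((0:ℝ) < 1) := ⟨one_pos⟩

def cr (u v : ℂ) : ℝ := u.re * v.im - u.im * v.re

lemma toC_normSq (x : C1) : Complex.normSq (toC x) = 1 := Circle.normSq_coe _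
lemma toC_inj : Function.Injective toC := fun _ _ h =>
  AddCircle.injective_toCircle one_ne_zero (Subtype.coe_injective h)
lemma toC_cont : Continuous toC := continuous_subtype_val.comp AddCircle.continuous_toCircle

/-- Real coordinate version of the chord parametrization. -/
lemma real_param {A B d1 d2 w1 w2 : ℝ} (hd : d1^2 + d2^2 ≠ 0)
    (hP : A^2 + B^2 = 1) (hQ : (A+d1)^2 + (B+d2)^2 = 1)
    (hc : d1*w2 - d2*w1 = 0) (hz : (A+w1)^2 + (B+w2)^2 ≤ 1) :
    ∃ t : ℝ, 0 ≤ t ∧ t ≤ 1 ∧ w1 = t*d1 ∧ w2 = t*d2 ∧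
      ((A+w1)^2 + (B+w2)^2 = 1 → t = 0 ∨ t = 1) := by
  have hD : 0 < d1^2 + d2^2 := lt_of_le_of_ne (by positivity) (Ne.symm hd)
  set t : ℝ := (d1*w1 + d2*w2)/(d1^2 + d2^2) with ht
  have hw1 : w1 = t*d1 := by rw [ht, div_mul_eq_mul_div, eq_div_iff hd]; linear_combination (-d2) * hc
  have hw2 : w2 = t*d2 := by rw [ht, div_mul_eq_mul_div, eq_div_iff hd]; linear_combination d1 * hc
  have hE : 2*(A*d1+B*d2) + (d1^2+d2^2) = 0 := by linear_combination hQ - hP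
  have expand : (A+w1)^2 + (B+w2)^2 = 1 + t*(t-1)*(d1^2+d2^2) := by
    rw [hw1, hw2]; linear_combination hP + t * hE
  have key : t*(t-1)*(d1^2+d2^2) ≤ 0 := by linarith [expand, hz]
  have h0 : 0 ≤ t := by
    by_contra h; push_neg at h
    nlinarith [mul_pos (mul_pos (neg_pos.mpr h) (show (0:ℝ) < 1 - t by linarith)) hD, key]
  have h1 : t ≤ 1 := by
    by_contra h; push_neg at h
    nlinarith [mul_pos (mul_pos (show (0:ℝ) < t by linarith) (show (0:ℝ) < t - 1 by linarith)) hD, key]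
  refine ⟨t, h0, h1, hw1, hw2, fun he => ?_⟩
  have : t*(t-1)*(d1^2+d2^2) = 0 := by linarith [expand, he]
  rcases mul_eq_zero.mp this with h | h
  · rcases mul_eq_zero.mp h with h | h
    · exact Or.inl h
    · exact Or.inr (by linarith)
  · exact absurd h hd

/-- Chord parametrization: a point of the closed disk on the line through two distinct
circle points lies on the chord. -/
lemma chordParam {p q : C1} (hpq : p ≠ q) {z : ℂ} (hz : Complex.normSq z ≤ 1)
    (hc : cr (toC q - toC p) (z - toC p) = 0) :
    ∃ t : ℝ, 0 ≤ t ∧ t ≤ 1 ∧ z = toC p + t • (toC q - toC p) ∧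
      (Complex.normSq z = 1 → z = toC p ∨ z = toC q) := by
  have hP := toC_normSq p
  have hQ := toC_normSq q
  have hd : (toC q - toC p).re^2 + (toC q - toC p).im^2 ≠ 0 := by
    intro h
    have h1 : (toC q - toC p).re = 0 := by nlinarith [sq_nonneg (toC q - toC p).re, sq_nonneg (toC q - toC p).im]
    have h2 : (toC q - toC p).im = 0 := by nlinarith [sq_nonneg (toC q - toC p).re, sq_nonneg (toC q - toC p).im]
    exact hpq (toC_inj (by apply Complex.ext <;> [skip; skip] <;> simp [Complex.sub_re, Complex.sub_im] at h1 h2 <;> linarith))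
  simp only [Complex.normSq_apply] at hz hP hQ
  obtain ⟨t, h0, h1, hw1, hw2, heq⟩ := real_param (A := (toC p).re) (B := (toC p).im)
      (d1 := (toC q - toC p).re) (d2 := (toC q - toC p).im)
      (w1 := (z - toC p).re) (w2 := (z - toC p).im) hd
      (by ring_nf; ring_nf at hP; linarith)
      (by simp [Complex.sub_re, Complex.sub_im]; ring_nf; ring_nf at hQ; linarith)
      (by simpa [cr] using hc)
      (by simp [Complex.sub_re, Complex.sub_im]; ring_nf; ring_nf at hz; linarith)
  have hzrep : z = toC p + t • (toC q - toC p) := by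
    apply Complex.ext
    · simp [Complex.add_re, Complex.smul_re, smul_eq_mul]
      have := hw1; simp [Complex.sub_re] at this; linarith
    · simp [Complex.add_im, Complex.smul_im, smul_eq_mul]
      have := hw2; simp [Complex.sub_im] at this; linarith
  refine ⟨t, h0, h1, hzrep, fun he => ?_⟩
  simp only [Complex.normSq_apply] at he
  rcases heq (by simp [Complex.sub_re, Complex.sub_im]; ring_nf; ring_nf at he; linarith) with h | h
  · left; rw [hzrep, h]; simp
  · right; rw [hzrep, h, one_smul]; ring

/-- affine evaluation of `cr d (· - e)` on combinations -/
lemma cr_affine (d e z1 z2 : ℂ) {p q : ℝ} (h : p + q = 1) :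
    cr d (p • z1 + q • z2 - e) = p * cr d (z1 - e) + q * cr d (z2 - e) := by
  simp only [cr, Complex.sub_re, Complex.sub_im, Complex.add_re, Complex.add_im,
    Complex.smul_re, Complex.smul_im, smul_eq_mul]
  linear_combination (d.re * e.im - d.im * e.re) * h

lemma cr_self_smul (d : ℂ) (t : ℝ) : cr d (t • d) = 0 := by
  simp only [cr, Complex.smul_re, Complex.smul_im, smul_eq_mul]; ring

/-- convex combinations of circle points stay in the closed disk -/
lemma comb_normSq_le {u v : ℂ} (hu : Complex.normSq u = 1) (hv : Complex.normSq v = 1)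
    {p q : ℝ} (hp : 0 ≤ p) (hq : 0 ≤ q) (hpq : p + q = 1) :
    Complex.normSq (p • u + q • v) ≤ 1 := by
  simp only [Complex.normSq_apply, Complex.add_re, Complex.add_im, Complex.smul_re,
    Complex.smul_im, smul_eq_mul] at *
  have expand : (p * u.re + q * v.re) * (p * u.re + q * v.re) +
      (p * u.im + q * v.im) * (p * u.im + q * v.im) =
      1 - p*q*((u.re-v.re)^2 + (u.im-v.im)^2) := by
    linear_combination (p^2 + p*q) * hu + (q^2 + p*q) * hv + (p+q+1) * hpq
  nlinarith [expand, mul_nonneg hp hq, sq_nonneg (u.re-v.re), sq_nonneg (u.im-v.im)]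

/-- strict version for distinct points and positive weights -/
lemma comb_normSq_lt {u v : ℂ} (hu : Complex.normSq u = 1) (hv : Complex.normSq v = 1)
    (huv : u ≠ v) {p q : ℝ} (hp : 0 < p) (hq : 0 < q) (hpq : p + q = 1) :
    Complex.normSq (p • u + q • v) < 1 := by
  have hne : (u.re - v.re) ^ 2 + (u.im - v.im) ^ 2 ≠ 0 := by
    intro h
    have h1 : u.re = v.re := by nlinarith [sq_nonneg (u.re - v.re), sq_nonneg (u.im - v.im)]
    have h2 : u.im = v.im := by nlinarith [sq_nonneg (u.re - v.re), sq_nonneg (u.im - v.im)]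
    exact huv (Complex.ext h1 h2)
  have hpos : 0 < (u.re - v.re) ^ 2 + (u.im - v.im) ^ 2 :=
    lt_of_le_of_ne (by positivity) (Ne.symm hne)
  simp only [Complex.normSq_apply, Complex.add_re, Complex.add_im, Complex.smul_re,
    Complex.smul_im, smul_eq_mul] at *
  have expand : (p * u.re + q * v.re) * (p * u.re + q * v.re) +
      (p * u.im + q * v.im) * (p * u.im + q * v.im) =
      1 - p*q*((u.re-v.re)^2 + (u.im-v.im)^2) := by
    linear_combination (p^2 + p*q) * hu + (q^2 + p*q) * hv + (p+q+1) * hpq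
  nlinarith [expand, mul_pos (mul_pos hp hq) hpos]

/-- two points of a preconnected set of reals avoiding `0` have the same sign -/
lemma same_sign {T : Set ℝ} (hT : IsPreconnected T) (h0 : 0 ∉ T) {x y : ℝ}
    (hx : x ∈ T) (hy : y ∈ T) : 0 < x * y := by
  rcases lt_trichotomy x 0 with h | h | h
  · rcases lt_trichotomy y 0 with h' | h' | h'
    · exact mul_pos_of_neg_of_neg h h'
    · exact absurd (h' ▸ hy) h0
    · exact absurd (hT.Icc_subset hx hy ⟨h.le, h'.le⟩) h0
  · exact absurd (h ▸ hx) h0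
  · rcases lt_trichotomy y 0 with h' | h' | h'
    · exact absurd (hT.Icc_subset hy hx ⟨h'.le, h.le⟩) h0
    · exact absurd (h' ▸ hy) h0
    · exact mul_pos h h'

/-- the key side-selection identity: `cr u w` in terms of a unit vector `a` -/
lemma cr_decomp {a : ℂ} (ha : Complex.normSq a = 1) (u w : ℂ) :
    cr u w = (a.re*u.re + a.im*u.im) * cr a w - (a.re*w.re + a.im*w.im) * cr a u := by
  simp only [cr, Complex.normSq_apply] at *
  linear_combination (-(u.re * w.im - u.im * w.re)) * ha

lemma normSq_lt_one_iff {z : ℂ} : Complex.normSq z < 1 ↔ z ∈ ball (0:ℂ) 1 := by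
  rw [mem_ball_zero_iff]
  have h : Complex.normSq z = ‖z‖^2 := by rw [Complex.normSq_eq_norm_sq]
  constructor <;> intro hh <;> nlinarith [norm_nonneg z]

lemma cr_self (d : ℂ) : cr d d = 0 := by simp [cr]; ring

lemma cr_sub (d u v : ℂ) : cr d (u - v) = cr d u - cr d v := by
  simp only [cr, Complex.sub_re, Complex.sub_im]; ring

lemma cr_smul (d : ℂ) (t : ℝ) (u : ℂ) : cr d (t • u) = t * cr d u := by
  simp only [cr, Complex.smul_re, Complex.smul_im, smul_eq_mul]; ring

lemma cr_I_mul (d : ℂ) : cr d (Complex.I * d) = Complex.normSq d := by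
  simp only [cr, Complex.mul_re, Complex.mul_im, Complex.I_re, Complex.I_im,
    Complex.normSq_apply]; ring

lemma cr_cont (d e : ℂ) : Continuous fun z => cr d (z - e) := by
  simp only [cr]
  exact ((continuous_const.mul ((Complex.continuous_im.comp (continuous_id.sub continuous_const))))).sub
    (continuous_const.mul ((Complex.continuous_re.comp (continuous_id.sub continuous_const))))

lemma dot_lt_one {u v : ℂ} (hu : Complex.normSq u = 1) (hv : Complex.normSq v = 1)
    (huv : v ≠ u) : 0 < 1 - (u.re * v.re + u.im * v.im) := by
  have hne : (u.re - v.re) ^ 2 + (u.im - v.im) ^ 2 ≠ 0 := by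
    intro h
    have h1 : u.re = v.re := by nlinarith [sq_nonneg (u.re - v.re), sq_nonneg (u.im - v.im)]
    have h2 : u.im = v.im := by nlinarith [sq_nonneg (u.re - v.re), sq_nonneg (u.im - v.im)]
    exact huv (Complex.ext h1.symm h2.symm)
  have hpos : 0 < (u.re - v.re) ^ 2 + (u.im - v.im) ^ 2 :=
    lt_of_le_of_ne (by positivity) (Ne.symm hne)
  simp only [Complex.normSq_apply] at hu hv
  nlinarith

lemma no_zero_comb {Xv Yv t : ℝ} (hs : 0 < Xv * Yv) (ht0 : 0 ≤ t) (ht1 : t ≤ 1)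
    (h0 : (1-t)*Xv + t*Yv = 0) : False := by
  have h2 : (1-t)*Xv^2 + t*(Xv*Yv) = 0 := by linear_combination Xv * h0
  have h3 : t*(Xv*Yv) = 0 :=
    le_antisymm (by nlinarith [sq_nonneg Xv]) (mul_nonneg ht0 hs.le)
  rcases mul_eq_zero.mp h3 with h | h
  · subst h
    have hX : Xv = 0 := by linarith
    rw [hX] at hs; simp at hs
  · rw [h] at hs; simp at hs

end Stmt7


set_option maxHeartbeats 1000000 in
theorem stmt_7 (G : Set (C1 ≃ₜ C1)) (hG : IsHomeoGroup G)
    (hGo : ∀ g ∈ G, OrientationPreserving g) (g : C1 ≃ₜ C1) (hg : g ∈ G) (a b : C1)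
    (hab : a ≠ b) (hfix : fixedPoints ⇑g = {a, b})
    (hatt : ∀ x, x ≠ b → Tendsto (fun n => (⇑g)^[n] x) atTop (nhds a))
    (hrep : ∀ x, x ≠ a → Tendsto (fun n => (⇑g.symm)^[n] x) atTop (nhds b))
    (Λ : Set (C1 × C1)) (hΛ : VeryFull Λ) (hinv : Invariant G Λ)
    (hno : (a, b) ∉ Λ) : ∃ l ∈ Λ, Linked a b l.1 l.2 := by
  classical
  by_contra hcon
  push_neg at hcon
  obtain ⟨lam, hgaps⟩ := hΛ
  set S : Set C1 := ({a,b}ᶜ : Set C1) with hS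
  -- fixed point facts
  have hga : g a = a := by
    have : a ∈ fixedPoints ⇑g := by rw [hfix]; exact mem_insert _ _
    exact this
  have hgb : g b = b := by
    have : b ∈ fixedPoints ⇑g := by rw [hfix]; exact mem_insert_of_mem _ rfl
    exact this
  have hsa : g.symm a = a := by
    have h := congrArg (⇑g.symm) hga
    rw [Homeomorph.symm_apply_apply] at h
    exact h.symm
  have hsb : g.symm b = b := by
    have h := congrArg (⇑g.symm) hgb
    rw [Homeomorph.symm_apply_apply] at h
    exact h.symm
  -- iterates preserve the lamination
  have hiterg : ∀ n (x y : C1), (x, y) ∈ Λ → ((⇑g)^[n] x, (⇑g)^[n] y) ∈ Λ := by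
    intro n
    induction n with
    | zero => intro x y h; simpa using h
    | succ n ih =>
      intro x y h
      have h2 := hinv g hg _ (ih x y h)
      simpa [Function.iterate_succ_apply'] using h2
  have hiters : ∀ n (x y : C1), (x, y) ∈ Λ → ((⇑g.symm)^[n] x, (⇑g.symm)^[n] y) ∈ Λ := by
    intro n
    induction n with
    | zero => intro x y h; simpa using h
    | succ n ih =>
      intro x y h
      have h2 := hinv g.symm (hG.2.1 g hg) _ (ih x y h)
      simpa [Function.iterate_succ_apply'] using h2
  -- no leaf has `a` or `b` as an endpoint
  have hEnd : ∀ x y : C1, (x, y) ∈ Λ → x ≠ a ∧ x ≠ b := by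
    intro x y hl
    constructor
    · intro hxe
      rw [hxe] at hl
      have hya : y ≠ a := Ne.symm (lam.ne _ hl)
      have hpn : ∀ n, ((a : C1), (⇑g.symm)^[n] y) ∈ Λ := fun n => by
        have h2 := hiters n a y hl
        rwa [Function.iterate_fixed hsa] at h2
      have htend : Tendsto (fun n => ((a : C1), (⇑g.symm)^[n] y)) atTop (nhds (a, b)) :=
        tendsto_const_nhds.prodMk_nhds (hrep y hya)
      have hcl : ((a, b) : C1 × C1) ∈ closure Λ :=
        mem_closure_of_tendsto htend (Eventually.of_forall hpn)
      exact hno (lam.isClosed _ hcl hab)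
    · intro hxe
      rw [hxe] at hl
      have hyb : y ≠ b := Ne.symm (lam.ne _ hl)
      have hpn : ∀ n, ((b : C1), (⇑g)^[n] y) ∈ Λ := fun n => by
        have h2 := hiterg n b y hl
        rwa [Function.iterate_fixed hgb] at h2
      have htend : Tendsto (fun n => ((b : C1), (⇑g)^[n] y)) atTop (nhds (b, a)) :=
        tendsto_const_nhds.prodMk_nhds (hatt y hyb)
      have hcl : ((b, a) : C1 × C1) ∈ closure Λ :=
        mem_closure_of_tendsto htend (Eventually.of_forall hpn)
      have hba : ((b, a) : C1 × C1) ∈ Λ := lam.isClosed _ hcl hab.symm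
      have hab' := lam.symm _ hba
      exact hno hab'
  -- endpoints of a leaf lie in the same component of the complement of {a,b}
  have hsame : ∀ x y : C1, (x,y) ∈ Λ →
      connectedComponentIn S x = connectedComponentIn S y ∧ x ∈ S ∧ y ∈ S := by
    intro x y hl
    obtain ⟨hxa, hxb⟩ := hEnd x y hl
    obtain ⟨hya, hyb⟩ := hEnd y x (lam.symm _ hl)
    have hxS : x ∈ S := by simp [hS, hxa, hxb]
    have hyS : y ∈ S := by simp [hS, hya, hyb]
    refine ⟨?_, hxS, hyS⟩
    by_contra hne
    exact hcon (x,y) hl ⟨hxS, hyS, hne⟩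
  set A : ℂ := toC a with hA
  set B : ℂ := toC b with hB
  have hAB : A ≠ B := fun h => hab (Stmt7.toC_inj h)
  -- the functional vanishing on the line through A and B
  set φ : ℂ → ℝ := fun z => Stmt7.cr (B - A) (z - A) with hφ
  have hφzero : ∀ x : C1, φ (toC x) = 0 → x = a ∨ x = b := by
    intro x h
    obtain ⟨t, _, _, _, hcirc⟩ := Stmt7.chordParam hab (le_of_eq (Stmt7.toC_normSq x)) h
    rcases hcirc (Stmt7.toC_normSq x) with h' | h'
    · exact Or.inl (Stmt7.toC_inj h')
    · exact Or.inr (Stmt7.toC_inj h')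
  have hsign : ∀ x y : C1, (x,y) ∈ Λ → 0 < φ (toC x) * φ (toC y) := by
    intro x y hl
    obtain ⟨hcomp, hxS, hyS⟩ := hsame x y hl
    have hK : IsPreconnected (connectedComponentIn S x) := isPreconnected_connectedComponentIn
    have himg : IsPreconnected ((fun z : C1 => φ (toC z)) '' connectedComponentIn S x) :=
      hK.image _ (((Stmt7.cr_cont (B - A) A).comp Stmt7.toC_cont).continuousOn)
    apply Stmt7.same_sign himg
    · rintro ⟨z, hz, hz0⟩
      have hzS : z ∈ S := connectedComponentIn_subset S x hz
      rcases hφzero z hz0 with rfl | rfl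
      · simp [hS] at hzS
      · simp [hS] at hzS
    · exact ⟨x, mem_connectedComponentIn hxS, rfl⟩
    · exact ⟨y, hcomp ▸ mem_connectedComponentIn hyS, rfl⟩
  -- chords avoid the line through A and B
  have hchordφ : ∀ z ∈ chords Λ, φ z ≠ 0 := by
    intro z hz h0
    rw [chords, mem_iUnion₂] at hz
    obtain ⟨p, hp, hzseg⟩ := hz
    rw [segment_eq_image'] at hzseg
    obtain ⟨t, ⟨ht0, ht1⟩, rfl⟩ := hzseg
    have hrw : toC p.1 + t • (toC p.2 - toC p.1) = (1-t) • toC p.1 + t • toC p.2 := by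
      push_cast [Complex.real_smul]; ring
    have haff := Stmt7.cr_affine (B - A) A (toC p.1) (toC p.2)
      (p := 1-t) (q := t) (by ring)
    rw [hφ] at h0
    simp only at h0
    rw [hrw, haff] at h0
    exact Stmt7.no_zero_comb (hsign p.1 p.2 hp) ht0 ht1 h0
  -- the midpoint of the chord AB
  set S2 : Set ℂ := ball (0:ℂ) 1 \ chords Λ with hS2
  set m : ℂ := (2⁻¹:ℝ) • A + (2⁻¹:ℝ) • B with hm
  have hmball : m ∈ ball (0:ℂ) 1 := Stmt7.normSq_lt_one_iff.mp
    (Stmt7.comb_normSq_lt (Stmt7.toC_normSq a) (Stmt7.toC_normSq b) hAB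
      (by norm_num) (by norm_num) (by norm_num))
  have hφAA : φ A = 0 := by rw [hφ]; simp [Stmt7.cr]
  have hφBB : φ B = 0 := by
    rw [hφ]; simpa using Stmt7.cr_self (B - A)
  have hmφ : φ m = 0 := by
    rw [hφ] at *
    simp only [hm]
    rw [Stmt7.cr_affine (B - A) A A B (by norm_num : (2⁻¹:ℝ) + 2⁻¹ = 1)]
    simp only at hφAA hφBB
    rw [hφAA, hφBB]; ring
  have hmS2 : m ∈ S2 := ⟨hmball, fun hc => hchordφ m hc hmφ⟩
  set C : Set ℂ := connectedComponentIn S2 m with hC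
  obtain ⟨F, hF3, hP⟩ := hgaps (closure C) ⟨m, hmS2, rfl⟩
  -- A lies in the closure of C
  have hseg : openSegment ℝ A B ⊆ S2 := by
    rintro z ⟨p, q, hp, hq, hpq, rfl⟩
    refine ⟨Stmt7.normSq_lt_one_iff.mp
      (Stmt7.comb_normSq_lt (Stmt7.toC_normSq a) (Stmt7.toC_normSq b) hAB hp hq hpq),
      fun hc => ?_⟩
    have h0 : φ (p • A + q • B) = 0 := by
      rw [hφ]; simp only
      rw [Stmt7.cr_affine (B - A) A A B hpq]
      rw [hφ] at hφAA hφBB; simp only at hφAA hφBB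
      rw [hφAA, hφBB]; ring
    exact hchordφ _ hc h0
  have hmseg : m ∈ openSegment ℝ A B :=
    ⟨2⁻¹, 2⁻¹, by norm_num, by norm_num, by norm_num, rfl⟩
  have hsegC : openSegment ℝ A B ⊆ C :=
    (convex_openSegment (𝕜 := ℝ) A B).isPreconnected.subset_connectedComponentIn hmseg hseg
  have hAcl : A ∈ closure C :=
    closure_mono hsegC (segment_subset_closure_openSegment (left_mem_segment ℝ A B))
  -- openness of S2
  have hS2open : IsOpen S2 := by
    set Φ : (C1 × C1) × ℝ → ℂ := fun q => toC q.1.1 + q.2 • (toC q.1.2 - toC q.1.1) with hΦ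
    have hΦc : Continuous Φ :=
      (Stmt7.toC_cont.comp (continuous_fst.comp continuous_fst)).add
        (continuous_snd.smul ((Stmt7.toC_cont.comp (continuous_snd.comp continuous_fst)).sub
          (Stmt7.toC_cont.comp (continuous_fst.comp continuous_fst))))
    set K : Set ℂ := Φ '' ((closure Λ) ×ˢ Icc (0:ℝ) 1) with hK
    have hKcomp : IsCompact K :=
      ((isClosed_closure.isCompact).prod isCompact_Icc).image hΦc
    have hchK : chords Λ ⊆ K := by
      intro z hz; rw [chords, mem_iUnion₂] at hz
      obtain ⟨p, hp, hzs⟩ := hz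
      rw [segment_eq_image'] at hzs
      obtain ⟨t, ht, rfl⟩ := hzs
      exact ⟨(p, t), ⟨subset_closure hp, ht⟩, rfl⟩
    have hKb : ∀ z ∈ K, z ∈ ball (0:ℂ) 1 → z ∈ chords Λ := by
      rintro z ⟨⟨p, t⟩, ⟨hp, ht⟩, rfl⟩ hb
      by_cases hpe : p.1 = p.2
      · exfalso
        have hz1 : Φ (p, t) = toC p.1 := by simp [hΦ, hpe]
        rw [hz1] at hb
        have := Stmt7.normSq_lt_one_iff.mpr hb
        rw [Stmt7.toC_normSq] at this
        exact lt_irrefl _ this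
      · have hpΛ : p ∈ Λ := lam.isClosed p hp hpe
        rw [chords, mem_iUnion₂]
        exact ⟨p, hpΛ, by rw [segment_eq_image']; exact ⟨t, ht, rfl⟩⟩
    have hSe : S2 = ball (0:ℂ) 1 ∩ Kᶜ := by
      ext z
      simp only [hS2, mem_diff, mem_inter_iff, mem_compl_iff]
      exact ⟨fun ⟨h1, h2⟩ => ⟨h1, fun hk => h2 (hKb z hk h1)⟩,
        fun ⟨h1, h2⟩ => ⟨h1, fun hc => h2 (hchK hc)⟩⟩
    rw [hSe]
    exact isOpen_ball.inter hKcomp.isClosed.isOpen_compl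
  have hCopen : IsOpen C := hS2open.connectedComponentIn
  -- choose the extremal vertex v
  obtain ⟨w0, hw0F, hw0a⟩ := Finset.exists_mem_ne (by omega : 1 < F.card) a
  set sfun : C1 → ℝ := fun w =>
    Stmt7.cr A (toC w - A) / (1 - (A.re * (toC w).re + A.im * (toC w).im)) with hsfun
  obtain ⟨v, hvF', hvmax⟩ := Finset.exists_max_image (F.erase a) sfun
    ⟨w0, Finset.mem_erase.mpr ⟨hw0a, hw0F⟩⟩
  have hva : v ≠ a := (Finset.mem_erase.mp hvF').1
  have hvF : v ∈ F := (Finset.mem_erase.mp hvF').2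
  set V : ℂ := toC v with hV
  have hVA : V ≠ A := fun h => hva (Stmt7.toC_inj h)
  have hDpos : ∀ w : C1, toC w ≠ A → 0 < 1 - (A.re * (toC w).re + A.im * (toC w).im) :=
    fun w hw => Stmt7.dot_lt_one (Stmt7.toC_normSq a) (Stmt7.toC_normSq w) hw
  have hside : ∀ w ∈ F, 0 ≤ Stmt7.cr (V - A) (toC w - A) := by
    intro w hw
    by_cases hwa : w = a
    · subst hwa
      rw [show toC w - A = 0 by rw [hA]; ring]
      simp [Stmt7.cr]
    · have hw' : w ∈ F.erase a := Finset.mem_erase.mpr ⟨hwa, hw⟩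
      have hWA : toC w ≠ A := fun h => hwa (Stmt7.toC_inj h)
      have hDv := hDpos v hVA
      have hDw := hDpos w hWA
      have hid := Stmt7.cr_decomp (a := A) (Stmt7.toC_normSq a) (V - A) (toC w - A)
      have hcrw : Stmt7.cr A (toC w - A)
          = sfun w * (1 - (A.re * (toC w).re + A.im * (toC w).im)) := by
        rw [hsfun]; field_simp
      have hcrv : Stmt7.cr A (V - A)
          = sfun v * (1 - (A.re * V.re + A.im * V.im)) := by
        rw [hsfun, hV]; field_simp
      have hnsA : A.re * A.re + A.im * A.im = 1 := by
        have := Stmt7.toC_normSq a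
        rw [← hA] at this
        simpa [Complex.normSq_apply] using this
      have e1 : A.re * (V - A).re + A.im * (V - A).im
          = -(1 - (A.re * V.re + A.im * V.im)) := by
        simp only [Complex.sub_re, Complex.sub_im]; linarith [hnsA]
      have e2 : A.re * (toC w - A).re + A.im * (toC w - A).im
          = -(1 - (A.re * (toC w).re + A.im * (toC w).im)) := by
        simp only [Complex.sub_re, Complex.sub_im]; linarith [hnsA]
      have hfin : Stmt7.cr (V - A) (toC w - A)
          = (1 - (A.re * V.re + A.im * V.im)) * (1 - (A.re * (toC w).re + A.im * (toC w).im))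
            * (sfun v - sfun w) := by
        rw [hid, e1, e2, hcrw, hcrv]; ring
      rw [hfin]
      exact mul_nonneg (mul_nonneg hDv.le hDw.le) (sub_nonneg.mpr (hvmax w hw'))
  -- closure C lies in the halfplane on one side of line(A, V)
  have hhalf : closure C ⊆ {z | 0 ≤ Stmt7.cr (V - A) (z - A)} := by
    rw [hP]
    apply convexHull_min
    · rintro z ⟨w, hw, rfl⟩; exact hside w hw
    · intro z1 h1 z2 h2 p q hp hq hpq
      simp only [mem_setOf_eq] at h1 h2 ⊢
      rw [Stmt7.cr_affine (V - A) A z1 z2 hpq]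
      exact add_nonneg (mul_nonneg hp h1) (mul_nonneg hq h2)
  -- the midpoint of the chord from A to V
  set mE : ℂ := (2⁻¹:ℝ) • A + (2⁻¹:ℝ) • V with hmE
  have hmEcl : mE ∈ closure C := by
    rw [hP]
    have hAh : A ∈ convexHull ℝ (toC '' (F : Set C1)) := by rw [← hP]; exact hAcl
    have hVh : V ∈ convexHull ℝ (toC '' (F : Set C1)) :=
      subset_convexHull ℝ _ ⟨v, hvF, rfl⟩
    exact (convex_convexHull ℝ _) hAh hVh (by norm_num) (by norm_num) (by norm_num)
  have hmEball : mE ∈ ball (0:ℂ) 1 := Stmt7.normSq_lt_one_iff.mp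
    (Stmt7.comb_normSq_lt (Stmt7.toC_normSq a) (Stmt7.toC_normSq v) (Ne.symm hVA)
      (by norm_num) (by norm_num) (by norm_num))
  have hmEcr : Stmt7.cr (V - A) (mE - A) = 0 := by
    simp only [hmE]
    rw [Stmt7.cr_affine (V - A) A A V (by norm_num : (2⁻¹:ℝ) + 2⁻¹ = 1)]
    rw [show A - A = (0:ℂ) by ring]
    have h1 : Stmt7.cr (V - A) (0:ℂ) = 0 := by simp [Stmt7.cr]
    have h2 := Stmt7.cr_self (V - A)
    rw [h1, h2]; ring
  have hmEnotC : mE ∉ C := by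
    intro hmem
    obtain ⟨ε, hε, hball⟩ := Metric.isOpen_iff.mp hCopen mE hmem
    set dv : ℂ := V - A with hdvdef
    have hdv : dv ≠ 0 := sub_ne_zero.mpr hVA
    set t0 : ℝ := ε / (2 * (‖dv‖ + 1)) with ht0def
    have ht0 : 0 < t0 := by positivity
    set z0 : ℂ := mE - t0 • (Complex.I * dv) with hz0def
    have hz0 : z0 ∈ ball mE ε := by
      rw [mem_ball, dist_eq_norm]
      have he : z0 - mE = -(t0 • (Complex.I * dv)) := by rw [hz0def]; ring
      rw [he, norm_neg, norm_smul, Real.norm_eq_abs, abs_of_pos ht0, norm_mul,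
        Complex.norm_I, one_mul, ht0def]
      rw [div_mul_eq_mul_div, div_lt_iff₀ (by positivity)]
      nlinarith [norm_nonneg dv, hε]
    have hz0C : z0 ∈ closure C := subset_closure (hball hz0)
    have hge := hhalf hz0C
    simp only [mem_setOf_eq] at hge
    have hcompute : Stmt7.cr dv (z0 - A) = - (t0 * Complex.normSq dv) := by
      have h1 : z0 - A = (mE - A) - t0 • (Complex.I * dv) := by rw [hz0def]; ring
      rw [h1, Stmt7.cr_sub, Stmt7.cr_smul, Stmt7.cr_I_mul, hmEcr]; ring
    rw [hcompute] at hge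
    have hnpos : 0 < Complex.normSq dv := Complex.normSq_pos.mpr hdv
    nlinarith [mul_pos ht0 hnpos]
  -- mE lies on a chord of the lamination
  have hmEchords : mE ∈ chords Λ := by
    by_contra hch
    have hmES2 : mE ∈ S2 := ⟨hmEball, hch⟩
    have hopen' : IsOpen (connectedComponentIn S2 mE) := hS2open.connectedComponentIn
    have hnhds : connectedComponentIn S2 mE ∈ nhds mE :=
      hopen'.mem_nhds (mem_connectedComponentIn hmES2)
    obtain ⟨z, hz1, hz2⟩ := mem_closure_iff_nhds.mp hmEcl _ hnhds
    have e1 := connectedComponentIn_eq hz1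
    have e2 := connectedComponentIn_eq (show z ∈ connectedComponentIn S2 m from hz2)
    exact hmEnotC (by rw [hC, e2, ← e1]; exact mem_connectedComponentIn hmES2)
  rw [chords, mem_iUnion₂] at hmEchords
  obtain ⟨l, hlΛ, hlseg⟩ := hmEchords
  set X : ℂ := toC l.1 with hX
  set Y : ℂ := toC l.2 with hY
  have hl12 : l.1 ≠ l.2 := lam.ne l hlΛ
  set ψ : ℂ → ℝ := fun z => Stmt7.cr (Y - X) (z - X) with hψ
  have hψmE : ψ mE = 0 := by
    rw [segment_eq_image'] at hlseg
    obtain ⟨t, ht, hrep⟩ := hlseg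
    rw [hψ]; simp only
    rw [← hrep, show X + t • (Y - X) - X = t • (Y - X) by ring]
    exact Stmt7.cr_self_smul (Y - X) t
  obtain ⟨hl1a, hl1b⟩ := hEnd l.1 l.2 hlΛ
  obtain ⟨hl2a, hl2b⟩ := hEnd l.2 l.1 (lam.symm _ hlΛ)
  have hψA : ψ A ≠ 0 := by
    intro h
    rw [hψ] at h; simp only at h
    obtain ⟨t, _, _, _, hcirc⟩ := Stmt7.chordParam hl12
      (le_of_eq (Stmt7.toC_normSq a)) h
    rcases hcirc (Stmt7.toC_normSq a) with h' | h'
    · exact hl1a (Stmt7.toC_inj h'.symm)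
    · exact hl2a (Stmt7.toC_inj h'.symm)
  have hψB : ψ B ≠ 0 := by
    intro h
    rw [hψ] at h; simp only at h
    obtain ⟨t, _, _, _, hcirc⟩ := Stmt7.chordParam hl12
      (le_of_eq (Stmt7.toC_normSq b)) h
    rcases hcirc (Stmt7.toC_normSq b) with h' | h'
    · exact hl1b (Stmt7.toC_inj h'.symm)
    · exact hl2b (Stmt7.toC_inj h'.symm)
  have hψV : ψ V = - ψ A := by
    have haff := Stmt7.cr_affine (Y - X) X A V (p := 2⁻¹) (q := 2⁻¹) (by norm_num)
    rw [hψ] at hψmE ⊢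
    simp only [hmE] at hψmE
    simp only
    rw [haff] at hψmE
    linarith
  -- ψ A and ψ B have the same sign
  have hψAB : 0 < ψ A * ψ B := by
    rcases lt_trichotomy (ψ A * ψ B) 0 with hlt | heq | hgt
    · exfalso
      have hden : ψ A - ψ B ≠ 0 := by
        intro h
        have : ψ A = ψ B := by linarith
        rw [this] at hlt
        nlinarith [sq_nonneg (ψ B)]
      set t0 : ℝ := ψ A / (ψ A - ψ B) with ht0
      have h01 : 0 ≤ t0 ∧ t0 ≤ 1 := by
        rcases lt_or_gt_of_ne hψA with hAneg | hApos
        · have hBpos : 0 < ψ B := by nlinarith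
          have hd : ψ A - ψ B < 0 := by linarith
          constructor
          · rw [ht0, div_nonneg_iff]; right; exact ⟨hAneg.le, hd.le⟩
          · rw [ht0, show ψ A / (ψ A - ψ B) = (-ψ A)/(-(ψ A - ψ B)) by
              rw [neg_div_neg_eq]]
            rw [div_le_one (by linarith)]
            linarith
        · have hBneg : ψ B < 0 := by nlinarith
          have hd : 0 < ψ A - ψ B := by linarith
          constructor
          · exact div_nonneg hApos.le hd.le
          · rw [ht0, div_le_one hd]; linarith
      set w : ℂ := (1 - t0) • A + t0 • B with hw
      have hcomb : (1 - t0) + t0 = 1 := by ring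
      have hw0 : ψ w = 0 := by
        rw [hψ, hw]; simp only
        rw [Stmt7.cr_affine (Y - X) X A B hcomb]
        have hmul : t0 * (ψ A - ψ B) = ψ A := div_mul_cancel₀ _ hden
        rw [hψ] at hmul; simp only at hmul
        linarith
      have hwn : Complex.normSq w ≤ 1 := by
        rw [hw]
        exact Stmt7.comb_normSq_le (Stmt7.toC_normSq a) (Stmt7.toC_normSq b)
          (by linarith [h01.2]) h01.1 hcomb
      have hw0' : Stmt7.cr (Y - X) (w - X) = 0 := by rw [hψ] at hw0; exact hw0
      obtain ⟨t, ht0', ht1', hwrep, _⟩ := Stmt7.chordParam hl12 hwn hw0'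
      -- φ w = 0 since w is on segment [A,B]
      have hφw : φ w = 0 := by
        rw [hφ, hw]; simp only
        rw [Stmt7.cr_affine (B - A) A A B hcomb]
        rw [hφ] at hφAA hφBB; simp only at hφAA hφBB
        rw [hφAA, hφBB]; ring
      -- but φ w is a combination of φ X and φ Y of the same sign
      have hrw2 : X + t • (Y - X) = (1-t) • X + t • Y := by
        push_cast [Complex.real_smul]; ring
      have hφw2 : φ w = (1-t) * φ X + t * φ Y := by
        rw [hφ]; simp only
        rw [hwrep, hrw2]
        exact Stmt7.cr_affine (B - A) A X Y (by ring)
      rw [hφw] at hφw2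
      exact Stmt7.no_zero_comb (hsign l.1 l.2 hlΛ) ht0' ht1' hφw2.symm
    · exfalso
      rcases mul_eq_zero.mp heq with h | h
      · exact hψA h
      · exact hψB h
    · exact hgt
  -- C lies strictly on one side of the chord XY
  have hψcont : Continuous ψ := by rw [hψ]; exact Stmt7.cr_cont (Y - X) X
  have hCconn : IsPreconnected C := isPreconnected_connectedComponentIn
  have h0im : (0:ℝ) ∉ ψ '' C := by
    rintro ⟨z, hzC, hz0⟩
    have hzS2 : z ∈ S2 := connectedComponentIn_subset _ _ hzC
    have hzb : Complex.normSq z ≤ 1 := by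
      have := Stmt7.normSq_lt_one_iff.mpr hzS2.1
      linarith
    rw [hψ] at hz0; simp only at hz0
    obtain ⟨t, ht0', ht1', hrep, _⟩ := Stmt7.chordParam hl12 hzb hz0
    have hzch : z ∈ chords Λ := by
      rw [chords, mem_iUnion₂]
      exact ⟨l, hlΛ, by rw [segment_eq_image']; exact ⟨t, ⟨ht0', ht1'⟩, hrep.symm⟩⟩
    exact hzS2.2 hzch
  have himg : IsPreconnected (ψ '' C) := hCconn.image ψ hψcont.continuousOn
  have hmC : m ∈ C := mem_connectedComponentIn hmS2
  have hψm : ψ m = 2⁻¹ * ψ A + 2⁻¹ * ψ B := by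
    rw [hψ, hm]; simp only
    exact Stmt7.cr_affine (Y - X) X A B (by norm_num)
  have hψmA : 0 < ψ m * ψ A := by
    rw [hψm]; nlinarith [hψAB, sq_nonneg (ψ A), sq_nonneg (ψ B)]
  have hm0 : ψ m ≠ 0 := fun h => by rw [h] at hψmA; simp at hψmA
  have hm2 : 0 < ψ m ^ 2 := by positivity
  have hfinal : ∀ z ∈ C, 0 < ψ z * ψ A := by
    intro z hz
    have h1 : 0 < ψ z * ψ m :=
      Stmt7.same_sign himg h0im ⟨z, hz, rfl⟩ ⟨m, hmC, rfl⟩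
    nlinarith [mul_pos h1 hψmA, hm2]
  have hclosed : IsClosed {z : ℂ | 0 ≤ ψ z * ψ A} :=
    isClosed_le continuous_const (hψcont.mul continuous_const)
  have hsub : closure C ⊆ {z | 0 ≤ ψ z * ψ A} :=
    closure_minimal (fun z hz => (hfinal z hz).le) hclosed
  have hVcl : V ∈ closure C := by
    rw [hP]; exact subset_convexHull ℝ _ ⟨v, hvF, rfl⟩
  have hcontr := hsub hVcl
  simp only [mem_setOf_eq] at hcontr
  rw [hψV] at hcontr
  have hA2 : 0 < ψ A ^ 2 := by positivity
  nlinarith [hcontr, hA2]
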